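/- In an iterative Plurality voting process where all voters are of type r, start from the truthful profile, and move one at a time via local-dominance strategic responses (under any singleton scheduler), the process converges to a voting equilibrium in at most n(m−1) steps. -/

import Mathlib

open Finset

/-- The Plurality winner of a score vector: highest score, ties broken
lexicographically (smallest index wins). -/
noncomputable def winner {m : ℕ} [NeZero m] (s : Fin m → ℕ) : Fin m :=
  (Finset.univ.filter fun c => ∀ d, s d ≤ s c).min'
    (by
      obtain ⟨c, hc⟩ := Finite.exists_max s
      exact ⟨c, Finset.mem_filter.mpr ⟨Finset.mem_univ c, hc⟩⟩)

/-- Add one vote for candidate `x` to score vector `s`. -/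
def addVote {m : ℕ} (s : Fin m → ℕ) (x : Fin m) : Fin m → ℕ :=
  fun c => s c + if c = x then 1 else 0

/-- The winner after one additional vote for `x` is added to `s`. -/
noncomputable def outcome {m : ℕ} [NeZero m] (s : Fin m → ℕ) (x : Fin m) : Fin m :=
  winner (addVote s x)

/-- Action `b` S-beats action `c` (w.r.t. strict preference `pref`). -/
def Beats {m : ℕ} [NeZero m] (S : Set (Fin m → ℕ)) (pref : Fin m → Fin m → Prop)
    (b c : Fin m) : Prop :=
  ∃ s ∈ S, pref (outcome s b) (outcome s c)

/-- Action `b` S-dominates action `c`. -/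
def Dominates {m : ℕ} [NeZero m] (S : Set (Fin m → ℕ)) (pref : Fin m → Fin m → Prop)
    (b c : Fin m) : Prop :=
  Beats S pref b c ∧ ¬ Beats S pref c b

/-- ℓ1 distance between score vectors. -/
def l1 {m : ℕ} (s s' : Fin m → ℕ) : ℕ := ∑ c, Nat.dist (s c) (s' c)

/-- Scores of the profile `a` excluding voter `i`'s vote. -/
def scoreExc {m n : ℕ} (a : Fin n → Fin m) (i : Fin n) : Fin m → ℕ :=
  fun c => (Finset.univ.filter fun j => j ≠ i ∧ a j = c).card

/-- Scores of the full profile `a`. -/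
def scoreOf {m n : ℕ} (a : Fin n → Fin m) : Fin m → ℕ :=
  fun c => (Finset.univ.filter fun j => a j = c).card

/-- The accessible set `S_i(a, r)`: ℓ1 ball of radius `r` around the scores of the others. -/
def ball {m n : ℕ} (a : Fin n → Fin m) (i : Fin n) (r : ℕ) : Set (Fin m → ℕ) :=
  {s' | l1 s' (scoreExc a i) ≤ r}

/-- Possible winners for voter `i` at state `a` with uncertainty `r`. -/
noncomputable def PossW {m n : ℕ} [NeZero m] (a : Fin n → Fin m) (i : Fin n) (r : ℕ) :
    Set (Fin m) :=
  {c | ∃ s' ∈ ball a i r, outcome s' c = c}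

/-- `H̄_w(s)`: candidates within `w` votes of the winner's score. -/
noncomputable def Hbar {m : ℕ} [NeZero m] (w : ℕ) (s : Fin m → ℕ) : Set (Fin m) :=
  {c | s (winner s) ≤ s c + w}

/-- The set of candidates locally dominating voter `i`'s current vote. -/
noncomputable def Dset {m n : ℕ} [NeZero m] (Q : Fin n → Fin m → Fin m → Prop) (r : ℕ)
    (a : Fin n → Fin m) (i : Fin n) : Set (Fin m) :=
  {c | Dominates (ball a i r) (Q i) c (a i)}

/-- `c` is voter `i`'s local-dominance strategic response at `a`:
`c` locally dominates `a i` and is `i`'s most preferred such candidate. -/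
noncomputable def Resp {m n : ℕ} [NeZero m] (Q : Fin n → Fin m → Fin m → Prop) (r : ℕ)
    (a : Fin n → Fin m) (i : Fin n) (c : Fin m) : Prop :=
  c ∈ Dset Q r a i ∧ ∀ d ∈ Dset Q r a i, d ≠ c → Q i c d

/-- One singleton strategic step: one voter moves to her strategic response. -/
noncomputable def StepRel {m n : ℕ} [NeZero m] (Q : Fin n → Fin m → Fin m → Prop) (r : ℕ)
    (a a' : Fin n → Fin m) : Prop :=
  ∃ i, (∀ j, j ≠ i → a' j = a j) ∧ a' i ≠ a i ∧ Resp Q r a i (a' i)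

/-- A voting equilibrium: no voter votes for a locally dominated candidate. -/
noncomputable def Equilibrium {m n : ℕ} [NeZero m] (Q : Fin n → Fin m → Fin m → Prop) (r : ℕ)
    (a : Fin n → Fin m) : Prop :=
  ∀ i, Dset Q r a i = ∅

/-- A truthful profile: each voter votes for her unique top candidate. -/
def Truthful {m n : ℕ} (Q : Fin n → Fin m → Fin m → Prop) (a : Fin n → Fin m) : Prop :=
  ∀ i, ∀ d, d ≠ a i → Q i (a i) d


/-! ### Auxiliary development -/

section Aux

open Finset

variable {m : ℕ} [NeZero m]

lemma winner_mem (s : Fin m → ℕ) :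
    winner s ∈ Finset.univ.filter fun c => ∀ d, s d ≤ s c := Finset.min'_mem _ _

lemma winner_le (s : Fin m → ℕ) (e : Fin m) : s e ≤ s (winner s) := by
  have := winner_mem s
  rw [Finset.mem_filter] at this
  exact this.2 e

lemma winner_lt (s : Fin m → ℕ) (e : Fin m) (he : e < winner s) : s e < s (winner s) := by
  by_contra h
  push_neg at h
  have hmax : ∀ d, s d ≤ s e := fun d => le_trans (winner_le s d) h
  have hmem : e ∈ Finset.univ.filter fun c => ∀ d, s d ≤ s c :=
    Finset.mem_filter.mpr ⟨Finset.mem_univ e, hmax⟩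
  have := Finset.min'_le _ e hmem
  exact absurd this (not_le.mpr he)

lemma winner_eq (s : Fin m → ℕ) (c : Fin m) (h1 : ∀ e, s e ≤ s c)
    (h2 : ∀ e, e < c → s e < s c) : winner s = c := by
  have hcmem : c ∈ Finset.univ.filter fun c' => ∀ d, s d ≤ s c' :=
    Finset.mem_filter.mpr ⟨Finset.mem_univ c, h1⟩
  have hle : winner s ≤ c := Finset.min'_le _ c hcmem
  rcases lt_or_eq_of_le hle with hlt | heq
  · have ha := h2 _ hlt
    have hb := winner_le s c
    omega
  · exact heq

lemma winner_eq_char (s : Fin m → ℕ) (c : Fin m) (h : winner s = c) :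
    (∀ e, s e ≤ s c) ∧ (∀ e, e < c → s e < s c) := by
  subst h
  exact ⟨winner_le s, winner_lt s⟩

omit [NeZero m] in
lemma addVote_apply (s : Fin m → ℕ) (x e : Fin m) :
    addVote s x e = s e + if e = x then 1 else 0 := rfl

/-- Adding a vote to the winner keeps it the winner. -/
lemma outcome_winner_self (s : Fin m → ℕ) : outcome s (winner s) = winner s := by
  apply winner_eq
  · intro e
    by_cases he : e = winner s
    · subst he; exact le_refl _
    · have h0 := winner_le s e
      simp only [addVote_apply, if_neg he, if_pos rfl]
      omega
  · intro e he
    have h1 := winner_lt s e he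
    have h2 : e ≠ winner s := ne_of_lt he
    simp only [addVote_apply, if_neg h2, if_pos rfl]
    omega

/-- The outcome of voting x is either x or the current winner. -/
lemma outcome_cases (s : Fin m → ℕ) (x : Fin m) :
    outcome s x = x ∨ outcome s x = winner s := by
  by_cases h : outcome s x = x
  · exact Or.inl h
  · right
    unfold outcome at h ⊢
    have hchar := winner_eq_char (addVote s x) _ rfl
    obtain ⟨hc1, hc2⟩ := hchar
    set w' := winner (addVote s x) with hw'
    have hwx : w' ≠ x := h
    apply (winner_eq s w' _ _).symm
    · intro e
      have h1 := hc1 e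
      simp only [addVote_apply, if_neg hwx] at h1
      by_cases hex : e = x
      · rw [if_pos hex] at h1; omega
      · rw [if_neg hex] at h1; omega
    · intro e he
      have h1 := hc2 e he
      simp only [addVote_apply, if_neg hwx] at h1
      by_cases hex : e = x
      · rw [if_pos hex] at h1; omega
      · rw [if_neg hex] at h1; omega

end Aux

section Paths

open Finset

variable {m : ℕ} [NeZero m]

omit [NeZero m] in
lemma natdist_def (a b : ℕ) : Nat.dist a b = (a - b) + (b - a) := rfl

/-- Two score vectors are adjacent: they differ by one at a single coordinate. -/
def Adj (p q : Fin m → ℕ) : Prop :=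
  ∃ f, (∀ g, g ≠ f → q g = p g) ∧ (q f = p f + 1 ∨ p f = q f + 1)

omit [NeZero m] in
lemma Adj.bound {p q : Fin m → ℕ} (h : Adj p q) (g : Fin m) :
    q g ≤ p g + 1 ∧ p g ≤ q g + 1 := by
  obtain ⟨f, hoff, hud⟩ := h
  by_cases hgf : g = f
  · subst hgf; omega
  · rw [hoff g hgf]; omega

omit [NeZero m] in
lemma Adj.pair {p q : Fin m → ℕ} (h : Adj p q) (g g' : Fin m) (hne : g ≠ g') :
    q g = p g ∨ q g' = p g' := by
  obtain ⟨f, hoff, hud⟩ := h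
  by_cases hgf : g = f
  · subst hgf; right; exact hoff g' (by intro hh; exact hne (hh ▸ rfl) )
  · left; exact hoff g hgf

/-- If β wins even when γ gets an extra vote, then β wins with its own extra
vote at any adjacent profile. -/
lemma lemH {p q : Fin m → ℕ} {β γ : Fin m} (hne : β ≠ γ)
    (h : winner (addVote p γ) = β) (hadj : Adj p q) :
    winner (addVote q β) = β := by
  obtain ⟨h1, h2⟩ := winner_eq_char _ _ h
  apply winner_eq
  · intro e
    by_cases heβ : e = β
    · subst heβ; exact le_refl _
    · have h1e := h1 e
      simp only [addVote_apply, if_neg hne] at h1e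
      show q e + (if e = β then 1 else 0) ≤ q β + (if β = β then 1 else 0)
      rw [if_neg heβ, if_pos rfl]
      have hb1 := hadj.bound e
      have hb2 := hadj.bound β
      rcases hadj.pair e β heβ with hp | hp <;>
        (by_cases heγ : e = γ
         · rw [if_pos heγ] at h1e; omega
         · rw [if_neg heγ] at h1e; omega)
  · intro e he
    have heβ : e ≠ β := ne_of_lt he
    have h2e := h2 e he
    simp only [addVote_apply, if_neg hne] at h2e
    show q e + (if e = β then 1 else 0) < q β + (if β = β then 1 else 0)
    rw [if_neg heβ, if_pos rfl]
    have hb1 := hadj.bound e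
    have hb2 := hadj.bound β
    rcases hadj.pair e β heβ with hp | hp <;>
      (by_cases heγ : e = γ
       · rw [if_pos heγ] at h2e; omega
       · rw [if_neg heγ] at h2e; omega)

/-- If d is the winner, then at any adjacent profile d wins with one extra vote. -/
lemma crown {p q : Fin m → ℕ} {d : Fin m} (h : winner p = d) (hadj : Adj p q) :
    winner (addVote q d) = d := by
  obtain ⟨h1, h2⟩ := winner_eq_char _ _ h
  apply winner_eq
  · intro e
    by_cases heβ : e = d
    · subst heβ; exact le_refl _
    · have h1e := h1 e
      show q e + (if e = d then 1 else 0) ≤ q d + (if d = d then 1 else 0)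
      rw [if_neg heβ, if_pos rfl]
      have hb1 := hadj.bound e
      have hb2 := hadj.bound d
      rcases hadj.pair e d heβ with hp | hp <;> omega
  · intro e he
    have heβ : e ≠ d := ne_of_lt he
    have h2e := h2 e he
    show q e + (if e = d then 1 else 0) < q d + (if d = d then 1 else 0)
    rw [if_neg heβ, if_pos rfl]
    have hb1 := hadj.bound e
    have hb2 := hadj.bound d
    rcases hadj.pair e d heβ with hp | hp <;> omega

omit [NeZero m] in
lemma l1_update (s v : Fin m → ℕ) (e : Fin m) (t : ℕ) :
    l1 (Function.update s e t) v + Nat.dist (s e) (v e)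
      = l1 s v + Nat.dist t (v e) := by
  unfold l1
  have h1 : ∑ x, Nat.dist (Function.update s e t x) (v x)
      = Nat.dist t (v e) + ∑ x ∈ Finset.univ.erase e, Nat.dist (s x) (v x) := by
    rw [← Finset.add_sum_erase _ _ (Finset.mem_univ e)]
    simp only [Function.update_self]
    congr 1
    apply Finset.sum_congr rfl
    intro x hx
    rw [Function.update_of_ne (Finset.ne_of_mem_erase hx)]
  have h2 : ∑ x, Nat.dist (s x) (v x)
      = Nat.dist (s e) (v e) + ∑ x ∈ Finset.univ.erase e, Nat.dist (s x) (v x) := by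
    rw [← Finset.add_sum_erase _ _ (Finset.mem_univ e)]
  omega

omit [NeZero m] in
lemma l1_eq_zero {s s' : Fin m → ℕ} (h : l1 s s' = 0) : s = s' := by
  funext g
  have := Finset.sum_eq_zero_iff.mp h g (Finset.mem_univ g)
  exact Nat.eq_of_dist_eq_zero this

/-- Connectivity of the ℓ1 ball: a predicate that changes its truth value
has an adjacent flipping pair within the ball. -/
lemma ball_connect (v : Fin m → ℕ) (r : ℕ) (P : (Fin m → ℕ) → Prop) :
    ∀ N (s s' : Fin m → ℕ), l1 s s' ≤ N → l1 s v ≤ r → l1 s' v ≤ r → P s → ¬ P s' →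
    ∃ p q, l1 p v ≤ r ∧ l1 q v ≤ r ∧ Adj p q ∧ P p ∧ ¬ P q := by
  intro N
  induction N with
  | zero =>
    intro s s' hd _ _ hP hP'
    have : s = s' := l1_eq_zero (Nat.le_zero.mp hd)
    exact absurd (this ▸ hP) hP'
  | succ N ih =>
    intro s s' hd hs hs' hP hP'
    by_cases hz : l1 s s' = 0
    · exact absurd ((l1_eq_zero hz) ▸ hP) hP'
    · -- pick the stepping coordinate
      have hex : ∃ e, s e ≠ s' e := by
        by_contra hno
        push_neg at hno
        apply hz
        unfold l1
        apply Finset.sum_eq_zero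
        intro x _
        rw [hno x]
        simp [Nat.dist_self]
      -- build the next step q and establish its properties
      have hstep : ∃ q e, (q = Function.update s e (if s e < s' e then s e + 1 else s e - 1))
          ∧ s e ≠ s' e ∧ l1 q v ≤ r := by
        by_cases hA : ∃ e, s e ≠ s' e ∧ ((s e < s' e ∧ s e < v e) ∨ (s' e < s e ∧ v e < s e))
        · obtain ⟨e, hne, hdir⟩ := hA
          refine ⟨_, e, rfl, hne, ?_⟩
          have hup := l1_update s v e (if s e < s' e then s e + 1 else s e - 1)
          have hda : Nat.dist (s e) (v e) = (s e - v e) + (v e - s e) := natdist_def _ _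
          have hdb : Nat.dist (if s e < s' e then s e + 1 else s e - 1) (v e)
              = ((if s e < s' e then s e + 1 else s e - 1) - v e)
                + (v e - (if s e < s' e then s e + 1 else s e - 1)) := natdist_def _ _
          by_cases hc : s e < s' e
          · rw [if_pos hc] at hup hdb ⊢; omega
          · rw [if_neg hc] at hup hdb ⊢; omega
        · push_neg at hA
          obtain ⟨e, hne⟩ := hex
          refine ⟨_, e, rfl, hne, ?_⟩
          -- every differing coordinate of s' is strictly farther from v
          have hkey : ∀ g, Nat.dist (s g) (v g)
              + (if s g = s' g then 0 else 1) ≤ Nat.dist (s' g) (v g) := by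
            intro g
            by_cases hg : s g = s' g
            · rw [if_pos hg, hg]; omega
            · have := hA g hg
              have d1 := natdist_def (s g) (v g)
              have d2 := natdist_def (s' g) (v g)
              rw [if_neg hg]
              omega
          have hsum : l1 s v + 1 ≤ l1 s' v := by
            unfold l1
            calc (∑ x, Nat.dist (s x) (v x)) + 1
                ≤ ∑ x, (Nat.dist (s x) (v x) + (if s x = s' x then 0 else 1)) := by
                  rw [Finset.sum_add_distrib]
                  have : (1:ℕ) ≤ ∑ x, (if s x = s' x then 0 else 1) := by
                    calc (1:ℕ) = if s e = s' e then 0 else 1 := by rw [if_neg hne]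
                    _ ≤ ∑ x, (if s x = s' x then 0 else 1) :=
                        Finset.single_le_sum (f := fun x => if s x = s' x then 0 else 1)
                          (fun x _ => Nat.zero_le _) (Finset.mem_univ e)
                  omega
              _ ≤ ∑ x, Nat.dist (s' x) (v x) := Finset.sum_le_sum (fun x _ => hkey x)
          have hup := l1_update s v e (if s e < s' e then s e + 1 else s e - 1)
          have hda : Nat.dist (s e) (v e) = (s e - v e) + (v e - s e) := natdist_def _ _
          have hdb : Nat.dist (if s e < s' e then s e + 1 else s e - 1) (v e)
              = ((if s e < s' e then s e + 1 else s e - 1) - v e)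
                + (v e - (if s e < s' e then s e + 1 else s e - 1)) := natdist_def _ _
          by_cases hc : s e < s' e
          · rw [if_pos hc] at hup hdb ⊢; omega
          · rw [if_neg hc] at hup hdb ⊢; omega
      obtain ⟨q, e, hqdef, hne, hqv⟩ := hstep
      have hadj : Adj s q := by
        refine ⟨e, ?_, ?_⟩
        · intro g hg; rw [hqdef, Function.update_of_ne hg]
        · rw [hqdef, Function.update_self]
          by_cases hc : s e < s' e
          · left; rw [if_pos hc]
          · right; rw [if_neg hc]; omega
      have hqd : l1 q s' + 1 ≤ l1 s s' := by
        have hup := l1_update s s' e (if s e < s' e then s e + 1 else s e - 1)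
        rw [← hqdef] at hup
        have hda : Nat.dist (s e) (s' e) = (s e - s' e) + (s' e - s e) := natdist_def _ _
        have hdb : Nat.dist (if s e < s' e then s e + 1 else s e - 1) (s' e)
            = ((if s e < s' e then s e + 1 else s e - 1) - s' e)
              + (s' e - (if s e < s' e then s e + 1 else s e - 1)) := natdist_def _ _
        by_cases hc : s e < s' e
        · rw [if_pos hc] at hup hdb; omega
        · rw [if_neg hc] at hup hdb; omega
      by_cases hPq : P q
      · exact ih q s' (by omega) hqv hs' hPq hP'
      · exact ⟨s, q, hs, hqv, hadj, hP, hPq⟩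

/-- The pivot lemma: if b and c are both possible winners, there is a point where
voting b elects b while voting c does not elect b. -/
lemma pivot_lemma (v : Fin m → ℕ) (r : ℕ) {b c : Fin m} (hbc : b ≠ c)
    {sb sc : Fin m → ℕ} (hsb : l1 sb v ≤ r) (hsc : l1 sc v ≤ r)
    (hb : outcome sb b = b) (hc : outcome sc c = c) :
    ∃ s, l1 s v ≤ r ∧ outcome s b = b ∧ outcome s c ≠ b := by
  by_cases h : outcome sc b = b
  · exact ⟨sc, hsc, h, by rw [hc]; exact fun hh => hbc hh.symm⟩
  · obtain ⟨p, q, hpv, hqv, hadj, hPp, hPq⟩ :=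
      ball_connect v r (fun x => outcome x b = b) (l1 sb sc) sb sc le_rfl hsb hsc hb h
    by_cases hpc : outcome p c = b
    · exact absurd (lemH hbc hpc hadj) hPq
    · exact ⟨p, hpv, hPp, hpc⟩

/-- If d is a possible winner with no pivot witnesses, then d is already winning
and in particular pivots against any other possible winner's witness. -/
lemma no_pivot_pivots (v : Fin m → ℕ) (r : ℕ) {d c : Fin m} (hdc : d ≠ c)
    {sd sc : Fin m → ℕ} (hsd : l1 sd v ≤ r) (hsc : l1 sc v ≤ r)
    (hd : outcome sd d = d) (hc : outcome sc c = c)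
    (hnp : ∀ s, l1 s v ≤ r → outcome s d = d → winner s = d) :
    ∃ s, l1 s v ≤ r ∧ winner s = d ∧ outcome s c = c := by
  have hwsd : winner sd = d := hnp sd hsd hd
  by_cases h : winner sc = d
  · exact ⟨sc, hsc, h, hc⟩
  · obtain ⟨p, q, hpv, hqv, hadj, hPp, hPq⟩ :=
      ball_connect v r (fun x => winner x = d) (l1 sd sc) sd sc le_rfl hsd hsc hwsd h
    exact absurd (hnp q hqv (crown hPp hadj)) hPq

end Paths

section FChar

open Finset

variable {m : ℕ} [NeZero m]

/-- Tie-breaking indicator: 1 if e beats c in ties (smaller index). -/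
def chi {m : ℕ} (e c : Fin m) : ℕ := if e < c then 1 else 0

/-- Cost of making `c` a winner (with one extra vote) raising c's score by k. -/
def Fc {m : ℕ} (v : Fin m → ℕ) (c : Fin m) (k : ℕ) : ℕ :=
  k + ∑ e, (v e - (v c + k + 1 - chi e c))

omit [NeZero m] in
lemma chi_self (c : Fin m) : chi c c = 0 := by simp [chi]

omit [NeZero m] in
lemma chi_le_one (e c : Fin m) : chi e c ≤ 1 := by
  unfold chi; split <;> omega

omit [NeZero m] in
lemma chi_asymm {e c : Fin m} (h : e ≠ c) : chi e c + chi c e = 1 := by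
  unfold chi
  rcases lt_or_gt_of_ne h with h' | h'
  · rw [if_pos h', if_neg (not_lt.mpr (le_of_lt h'))]
  · rw [if_neg (not_lt.mpr (le_of_lt h')), if_pos h']

omit [NeZero m] in
lemma addVote_self (s : Fin m → ℕ) (x : Fin m) : addVote s x x = s x + 1 := by
  unfold addVote; rw [if_pos rfl]

omit [NeZero m] in
lemma addVote_other (s : Fin m → ℕ) {x e : Fin m} (h : e ≠ x) : addVote s x e = s e := by
  unfold addVote; rw [if_neg h]; omega

/-- `c` can win within ℓ1 distance r of v iff some raise k has cost ≤ r. -/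
lemma Wmem_iff (v : Fin m → ℕ) (r : ℕ) (c : Fin m) :
    (∃ s, l1 s v ≤ r ∧ outcome s c = c) ↔ ∃ k, Fc v c k ≤ r := by
  constructor
  · rintro ⟨s, hs, hw⟩
    obtain ⟨h1, h2⟩ := winner_eq_char _ _ hw
    refine ⟨s c - v c, le_trans ?_ hs⟩
    unfold Fc l1
    set k := s c - v c with hk
    have hsc : s c ≤ v c + k := by omega
    rw [← Finset.add_sum_erase _ (fun e => v e - (v c + k + 1 - chi e c)) (Finset.mem_univ c),
        ← Finset.add_sum_erase _ (fun e => Nat.dist (s e) (v e)) (Finset.mem_univ c)]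
    have hc0 : v c - (v c + k + 1 - chi c c) = 0 := by rw [chi_self]; omega
    rw [hc0]
    have hkd : k ≤ Nat.dist (s c) (v c) := by
      have := natdist_def (s c) (v c); omega
    have hterm : ∀ e ∈ Finset.univ.erase c,
        v e - (v c + k + 1 - chi e c) ≤ Nat.dist (s e) (v e) := by
      intro e he
      have hec : e ≠ c := Finset.ne_of_mem_erase he
      have hle := h1 e
      rw [addVote_other _ hec, addVote_self] at hle
      have hde := natdist_def (s e) (v e)
      unfold chi
      by_cases hlt : e < c
      · have h2' := h2 e hlt
        rw [addVote_other _ hec, addVote_self] at h2'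
        rw [if_pos hlt]
        omega
      · rw [if_neg hlt]
        omega
    have := Finset.sum_le_sum hterm
    omega
  · rintro ⟨k, hF⟩
    set s : Fin m → ℕ := fun e => if e = c then v c + k else min (v e) (v c + k + 1 - chi e c)
      with hsdef
    have hsc : s c = v c + k := by rw [hsdef]; simp
    have hse : ∀ e, e ≠ c → s e = min (v e) (v c + k + 1 - chi e c) := by
      intro e he; rw [hsdef]; simp [he]
    refine ⟨s, ?_, ?_⟩
    · unfold l1
      refine le_trans (le_of_eq ?_) hF
      unfold Fc
      rw [← Finset.add_sum_erase _ (fun e => Nat.dist (s e) (v e)) (Finset.mem_univ c),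
          ← Finset.add_sum_erase _ (fun e => v e - (v c + k + 1 - chi e c)) (Finset.mem_univ c)]
      have hc0 : v c - (v c + k + 1 - chi c c) = 0 := by rw [chi_self]; omega
      rw [hc0, hsc]
      have hdk : Nat.dist (v c + k) (v c) = k := by
        have := natdist_def (v c + k) (v c); omega
      rw [hdk]
      have hsum : ∀ e ∈ Finset.univ.erase c,
          Nat.dist (s e) (v e) = v e - (v c + k + 1 - chi e c) := by
        intro e he
        have hec : e ≠ c := Finset.ne_of_mem_erase he
        rw [hse e hec]
        have := natdist_def (min (v e) (v c + k + 1 - chi e c)) (v e)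
        omega
      rw [Finset.sum_congr rfl hsum]
      omega
    · apply winner_eq
      · intro e
        by_cases hec : e = c
        · subst hec; exact le_refl _
        · rw [addVote_other _ hec, addVote_self, hsc, hse e hec]
          have := chi_le_one e c
          omega
      · intro e he
        have hec : e ≠ c := ne_of_lt he
        rw [addVote_other _ hec, addVote_self, hsc, hse e hec]
        have : chi e c = 1 := by unfold chi; rw [if_pos he]
        omega

omit [NeZero m] in
/-- Raising a competitor's score does not decrease the cost. -/
lemma Fc_mono_other {v : Fin m → ℕ} {x d : Fin m} (hxd : x ≠ d) (k : ℕ) :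
    Fc v d k ≤ Fc (addVote v x) d k := by
  unfold Fc
  rw [addVote_other _ (Ne.symm hxd)]
  refine Nat.add_le_add_left (Finset.sum_le_sum fun e _ => ?_) k
  by_cases hex : e = x
  · subst hex; rw [addVote_self]; omega
  · rw [addVote_other _ hex]

omit [NeZero m] in
lemma Fc_split (v w : Fin m → ℕ) (x : Fin m) (t : Fin m → ℕ)
    (hw : ∀ e, e ≠ x → w e = v e) :
    (∑ e, (w e - t e)) + (v x - t x) = (∑ e, (v e - t e)) + (w x - t x) := by
  rw [← Finset.add_sum_erase _ (fun e => w e - t e) (Finset.mem_univ x),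
      ← Finset.add_sum_erase _ (fun e => v e - t e) (Finset.mem_univ x)]
  rw [Finset.sum_congr rfl (fun e he => by rw [hw e (Finset.ne_of_mem_erase he)])]
  omega

omit [NeZero m] in
lemma Fc_other_le {v : Fin m → ℕ} {x d : Fin m} (hxd : x ≠ d) (k : ℕ) :
    Fc (addVote v x) d k ≤ Fc v d k + 1 := by
  unfold Fc
  rw [addVote_other _ (Ne.symm hxd)]
  have hs := Fc_split v (addVote v x) x (fun e => v d + k + 1 - chi e d)
    (fun e he => addVote_other _ he)
  simp only [addVote_self] at hs
  omega

omit [NeZero m] in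
/-- If the competitor stays below the threshold, the cost is unchanged. -/
lemma Fc_other_eq {v : Fin m → ℕ} {x d : Fin m} (hxd : x ≠ d) (k : ℕ)
    (hlow : v x + 1 ≤ v d + k + 1 - chi x d) :
    Fc (addVote v x) d k = Fc v d k := by
  unfold Fc
  rw [addVote_other _ (Ne.symm hxd)]
  have hs := Fc_split v (addVote v x) x (fun e => v d + k + 1 - chi e d)
    (fun e he => addVote_other _ he)
  simp only [addVote_self] at hs
  omega

omit [NeZero m] in
/-- If the competitor is at/above the threshold, the cost increases by exactly 1. -/
lemma Fc_other_succ {v : Fin m → ℕ} {x d : Fin m} (hxd : x ≠ d) (k : ℕ)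
    (hhigh : v d + k + 1 - chi x d ≤ v x) :
    Fc (addVote v x) d k = Fc v d k + 1 := by
  unfold Fc
  rw [addVote_other _ (Ne.symm hxd)]
  have hs := Fc_split v (addVote v x) x (fun e => v d + k + 1 - chi e d)
    (fun e he => addVote_other _ he)
  simp only [addVote_self] at hs
  omega

omit [NeZero m] in
/-- Raising one's own score by one changes the cost by the k-shift. -/
lemma Fc_self (v : Fin m → ℕ) (d : Fin m) (k : ℕ) :
    Fc (addVote v d) d k + 1 = Fc v d (k + 1) := by
  unfold Fc
  rw [addVote_self]
  have hsame : ∀ e ∈ (Finset.univ : Finset (Fin m)),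
      addVote v d e - (v d + 1 + k + 1 - chi e d) = v e - (v d + (k + 1) + 1 - chi e d) := by
    intro e _
    by_cases hed : e = d
    · subst hed; rw [addVote_self, chi_self]; omega
    · rw [addVote_other _ hed]
      omega
  rw [Finset.sum_congr rfl hsame]
  omega

omit [NeZero m] in
lemma Fc_k_succ_le (v : Fin m → ℕ) (c : Fin m) (k : ℕ) :
    Fc v c (k + 1) ≤ Fc v c k + 1 := by
  unfold Fc
  have hsum : ∀ e ∈ (Finset.univ : Finset (Fin m)),
      v e - (v c + (k + 1) + 1 - chi e c) ≤ v e - (v c + k + 1 - chi e c) := by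
    intro e _
    have := chi_le_one e c
    omega
  have := Finset.sum_le_sum hsum
  omega

end FChar

section Transfer

open Finset

variable {m : ℕ}

lemma chi_tri (a b c : Fin m) : chi a b + chi b c ≤ 1 + chi a c := by
  unfold chi
  by_cases h1 : a < b <;> by_cases h2 : b < c <;> by_cases h3 : a < c <;>
      simp only [h1, h2, h3, if_true, if_false] <;>
    first
      | omega
      | exact absurd (h1.trans h2) h3

/-- Cross construction: if `x` (suitably raised by k') reaches the winning level of a
`z`-solution, then `x` can win at no greater cost. -/
lemma Fc_transfer (v : Fin m → ℕ) {z x : Fin m} (hzx : z ≠ x) (k k' : ℕ)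
    (hlevel : v z + k + 1 - chi x z ≤ v x + k')
    (hcost : k' ≤ k + (v x - (v z + k + 1 - chi x z))) :
    Fc v x k' ≤ Fc v z k := by
  unfold Fc
  rw [← Finset.add_sum_erase _ (fun e => v e - (v x + k' + 1 - chi e x)) (Finset.mem_univ x),
      ← Finset.add_sum_erase _ (fun e => v e - (v z + k + 1 - chi e z)) (Finset.mem_univ x)]
  have hself : v x - (v x + k' + 1 - chi x x) = 0 := by rw [chi_self]; omega
  rw [hself]
  have hterm : ∀ e ∈ Finset.univ.erase x,
      v e - (v x + k' + 1 - chi e x) ≤ v e - (v z + k + 1 - chi e z) := by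
    intro e he
    have htri := chi_tri e x z
    have hc1 := chi_le_one e x
    have hc2 := chi_le_one e z
    have hc3 := chi_le_one x z
    omega
  have := Finset.sum_le_sum hterm
  omega

/-- The key transfer lemma: legitimacy of another voter's move from x to y preserves
the non-winnability of d. -/
lemma transfer (u : Fin m → ℕ) (r : ℕ) {x y b d : Fin m} (hxy : x ≠ y) (hdb : d ≠ b)
    (H1 : ∀ k, r + 1 ≤ Fc (addVote u x) d k)
    (H2 : ∃ k, Fc (addVote u b) y k ≤ r)
    (H3 : ∀ k, r + 1 ≤ Fc (addVote u b) x k) :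
    ∀ k, r + 1 ≤ Fc (addVote u y) d k := by
  intro k
  by_contra hcon
  push_neg at hcon
  have hcon' : Fc (addVote u y) d k ≤ r := by omega
  by_cases hdx : d = x
  · -- d = x : monotonicity chain
    subst hdx
    have hall : ∀ j, r + 1 ≤ Fc u d j := by
      intro j
      rcases j with _ | j'
      · have h1 := H1 0
        have h2 := Fc_self u d 0
        have h3 := Fc_k_succ_le u d 0
        omega
      · have h1 := H1 j'
        have h2 := Fc_self u d j'
        omega
    have := Fc_mono_other (Ne.symm hxy) (v := u) (d := d) k
    have := hall k
    omega
  · by_cases hdy : d = y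
    · -- d = y : outright contradiction from H1, H2, H3
      subst hdy
      obtain ⟨k₀, hk₀⟩ := H2
      have hby : b ≠ d := Ne.symm hdb
      have hmono : Fc u d k₀ ≤ Fc (addVote u b) d k₀ := Fc_mono_other hby k₀
      by_cases hxb : x = b
      · subst hxb
        have := H1 k₀
        omega
      · have hle := Fc_other_le (v := u) (x := x) (d := d) (fun h => hdx h.symm) k₀
        have h1 := H1 k₀
        have hm2 : Fc u d k₀ ≤ Fc (addVote u x) d k₀ := Fc_mono_other (fun h => hdx h.symm) k₀
        -- x must be at/above d's threshold
        by_cases hlow : u x + 1 ≤ u d + k₀ + 1 - chi x d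
        · have := Fc_other_eq (fun h => hdx h.symm) k₀ hlow
          omega
        · have hhigh : u d + k₀ + 1 - chi x d ≤ u x := by omega
          -- build an x-solution at center (addVote u b), contradicting H3
          have htr : Fc (addVote u b) x 0 ≤ Fc (addVote u b) d k₀ := by
            apply Fc_transfer _ hdx k₀ 0
            · rw [addVote_other _ hby.symm, addVote_other _ hxb]
              omega
            · omega
          have := H3 0
          omega
    · -- main case : d ∉ {x, y}
      have h1k := H1 k
      have hmy : Fc u d k ≤ Fc (addVote u y) d k := Fc_mono_other (fun h => hdy h.symm) k
      have hlex : Fc (addVote u x) d k ≤ Fc u d k + 1 :=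
        Fc_other_le (fun h => hdx h.symm) k
      -- x must be at/above d's threshold
      by_cases hlowx : u x + 1 ≤ u d + k + 1 - chi x d
      · have := Fc_other_eq (fun h => hdx h.symm) k hlowx
        omega
      · have hhx : u d + k + 1 - chi x d ≤ u x := by omega
        -- y must be strictly below d's threshold
        by_cases hhy : u d + k + 1 - chi y d ≤ u y
        · have := Fc_other_succ (fun h => hdy h.symm) k hhy
          omega
        · have hlowy : u y + 1 ≤ u d + k + 1 - chi y d := by omega
          -- x can win at center u
          have hxu : Fc u x 0 ≤ Fc u d k := by
            apply Fc_transfer _ hdx k 0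
            · omega
            · omega
          by_cases hxb : x = b
          · -- x = b : x wins at its own center too
            subst hxb
            have h2 := Fc_self u x 0
            have h3 := Fc_k_succ_le u x 0
            have := H3 0
            omega
          · by_cases hbthr : u b + 1 ≤ u x + 0 + 1 - chi b x
            · -- b below x's level : x wins at center (addVote u b)
              have := Fc_other_eq (x := b) (d := x) (fun h => hxb h.symm) 0 hbthr
              have := H3 0
              omega
            · have hbhigh : u x + 1 - chi b x ≤ u b := by omega
              by_cases hyb : y = b
              · -- y = b : pure arithmetic contradiction
                subst hyb
                have htri := chi_tri y x d
                have hc1 := chi_le_one y x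
                have hc2 := chi_le_one x d
                have hc3 := chi_le_one y d
                omega
              · obtain ⟨k₀, hk₀⟩ := H2
                by_cases hxythr : u y + k₀ + 1 - chi x y ≤ u x
                · have htr : Fc (addVote u b) x 0 ≤ Fc (addVote u b) y k₀ := by
                    apply Fc_transfer _ (Ne.symm hxy) k₀ 0
                    · rw [addVote_other _ hyb, addVote_other _ hxb]
                      omega
                    · omega
                  have := H3 0
                  omega
                · have hxylow : u x + 1 ≤ u y + k₀ + 1 - chi x y := by omega
                  -- u x ≥ u y + 1 + chi y d - chi x d
                  have hgap : u y + 1 + chi y d ≤ u x + chi x d := by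
                    have hc2 := chi_le_one x d
                    have hc3 := chi_le_one y d
                    omega
                  by_cases hxy' : x < y
                  · -- level Ly, k' = u y + k₀ - u x
                    have hchixy : chi x y = 1 := by unfold chi; rw [if_pos hxy']
                    have htr : Fc (addVote u b) x (u y + k₀ - u x)
                        ≤ Fc (addVote u b) y k₀ := by
                      apply Fc_transfer _ (Ne.symm hxy) k₀ _
                      · rw [addVote_other _ hyb, addVote_other _ hxb]
                        omega
                      · rw [addVote_other _ hyb, addVote_other _ hxb]
                        have hc2 := chi_le_one x d
                        have hc3 := chi_le_one y d
                        omega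
                    have := H3 (u y + k₀ - u x)
                    omega
                  · -- y < x : level Ly + 1, k' = u y + k₀ + 1 - u x
                    have hyx : y < x := by
                      rcases lt_or_gt_of_ne hxy with h | h
                      · exact absurd h hxy'
                      · exact h
                    have hchixy : chi x y = 0 := by unfold chi; rw [if_neg hxy']
                    have hchiyx : chi y x = 1 := by unfold chi; rw [if_pos hyx]
                    -- from y < x : chi x d ≤ chi y d
                    have htri := chi_tri y x d
                    have hxd2 : chi x d ≤ chi y d := by omega
                    have htr : Fc (addVote u b) x (u y + k₀ + 1 - u x)
                        ≤ Fc (addVote u b) y k₀ := by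
                      apply Fc_transfer _ (Ne.symm hxy) k₀ _
                      · rw [addVote_other _ hyb, addVote_other _ hxb]
                        omega
                      · rw [addVote_other _ hyb, addVote_other _ hxb]
                        omega
                    have := H3 (u y + k₀ + 1 - u x)
                    omega

end Transfer

section Dominance

open Finset

variable {m : ℕ} [NeZero m]

/-- `c` is a possible winner within radius r of center v. -/
def Wm (v : Fin m → ℕ) (r : ℕ) (c : Fin m) : Prop :=
  ∃ s, l1 s v ≤ r ∧ outcome s c = c

variable {v : Fin m → ℕ} {r : ℕ} {pref : Fin m → Fin m → Prop}

/-- The winner of any point of the ball is a possible winner. -/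
lemma winner_Wm {s : Fin m → ℕ} (hs : l1 s v ≤ r) : Wm v r (winner s) :=
  ⟨s, hs, outcome_winner_self s⟩

section withPref

variable (htot : ∀ a b : Fin m, a ≠ b → pref a b ∨ pref b a)
  (hirr : ∀ a, ¬ pref a a)
  (htr : ∀ {a b c : Fin m}, pref a b → pref b c → pref a c)

omit [NeZero m] in
include htot htr in
lemma finset_max_pref :
    ∀ (s : Finset (Fin m)), s.Nonempty → ∃ a ∈ s, ∀ e ∈ s, e ≠ a → pref a e := by
  classical
  intro s
  induction s using Finset.induction_on with
  | empty => rintro ⟨x, hx⟩; exact absurd hx (Finset.notMem_empty x)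
  | @insert x t hx ih =>
    intro _
    by_cases ht : t.Nonempty
    · obtain ⟨a₀, ha₀, hmax⟩ := ih ht
      have hxa : x ≠ a₀ := fun h => hx (h ▸ ha₀)
      rcases htot x a₀ hxa with h | h
      · refine ⟨x, Finset.mem_insert_self x t, ?_⟩
        intro e he hne
        rcases Finset.mem_insert.mp he with rfl | het
        · exact absurd rfl hne
        · by_cases hea : e = a₀
          · exact hea ▸ h
          · exact htr h (hmax e het hea)
      · refine ⟨a₀, Finset.mem_insert_of_mem ha₀, ?_⟩
        intro e he hne
        rcases Finset.mem_insert.mp he with rfl | het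
        · exact h
        · exact hmax e het hne
    · refine ⟨x, Finset.mem_insert_self x t, ?_⟩
      intro e he hne
      rcases Finset.mem_insert.mp he with rfl | het
      · exact absurd rfl hne
      · exact (ht ⟨e, het⟩).elim

include htot hirr htr

/-- Compromise: under the invariant, anything that beats the current vote is
less preferred. -/
lemma beats_compromise {b c : Fin m} (hcb : c ≠ b)
    (hINV : ∀ e, pref e b → ¬ Wm v r e)
    (hbeats : Beats {s | l1 s v ≤ r} pref c b) : pref b c := by
  rcases htot c b hcb with hpcb | hpbc
  · exfalso
    obtain ⟨s, hs, hp⟩ := hbeats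
    have hs' : l1 s v ≤ r := hs
    rcases outcome_cases s c with hc | hc
    · exact hINV c hpcb ⟨s, hs', hc⟩
    · rcases outcome_cases s b with hb | hb
      · rw [hc, hb] at hp
        exact hINV _ hp (winner_Wm hs')
      · rw [hc, hb] at hp
        exact hirr _ hp
  · exact hpbc

/-- Under the invariant, a dominating candidate is a possible winner. -/
lemma dom_cW {b c : Fin m}
    (hINV : ∀ e, pref e b → ¬ Wm v r e)
    (hbeats : Beats {s | l1 s v ≤ r} pref c b) : Wm v r c := by
  obtain ⟨s, hs, hp⟩ := hbeats
  have hs' : l1 s v ≤ r := hs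
  rcases outcome_cases s c with hc | hc
  · exact ⟨s, hs', hc⟩
  · exfalso
    rcases outcome_cases s b with hb | hb
    · rw [hc, hb] at hp
      exact hINV _ hp (winner_Wm hs')
    · rw [hc, hb] at hp
      exact hirr _ hp

/-- Under the invariant, a dominated current vote is not a possible winner. -/
lemma dom_bnW {b c : Fin m} (hcb : c ≠ b)
    (hINV : ∀ e, pref e b → ¬ Wm v r e)
    (hdom : Dominates {s | l1 s v ≤ r} pref c b) : ¬ Wm v r b := by
  rintro ⟨sb, hsb, hob⟩
  obtain ⟨sc, hsc, hoc⟩ := dom_cW htot hirr htr hINV hdom.1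
  have hbc : pref b c := beats_compromise htot hirr htr hcb hINV hdom.1
  obtain ⟨s, hs, hsb', hsc'⟩ := pivot_lemma v r (Ne.symm hcb) hsb hsc hob hoc
  apply hdom.2
  refine ⟨s, hs, ?_⟩
  rw [hsb']
  rcases outcome_cases s c with hc | hc
  · rw [hc]; exact hbc
  · rw [hc] at hsc' ⊢
    rcases htot (winner s) b (fun h => hsc' (h ▸ rfl)) with hwb | hbw
    · exact absurd (winner_Wm hs) (hINV _ hwb)
    · exact hbw

/-- The preservation of the invariant for the moving voter. -/
lemma mover_preserve {b c : Fin m} (hcb : c ≠ b)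
    (hINV : ∀ e, pref e b → ¬ Wm v r e)
    (hdom : Dominates {s | l1 s v ≤ r} pref c b)
    (hmax : ∀ e, Dominates {s | l1 s v ≤ r} pref e b → e ≠ c → pref c e) :
    ∀ e, pref e c → ¬ Wm v r e := by
  classical
  have hbc : pref b c := beats_compromise htot hirr htr hcb hINV hdom.1
  have hcW : Wm v r c := dom_cW htot hirr htr hINV hdom.1
  have hbW : ¬ Wm v r b := dom_bnW htot hirr htr hcb hINV hdom
  -- safety of c : c never pivots against a better candidate
  have hsafe : ∀ s, l1 s v ≤ r → outcome s c = c → winner s ≠ c → pref c (winner s) := by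
    intro s hs hoc hwc
    rcases htot c (winner s) (fun h => hwc h.symm) with h | h
    · exact h
    · exfalso
      apply hdom.2
      refine ⟨s, hs, ?_⟩
      rcases outcome_cases s b with hb | hb
      · exact absurd ⟨s, hs, hb⟩ hbW
      · rw [hb, hoc]; exact h
  intro d hdc hdW
  -- the set of possible winners preferred to c
  set D : Finset (Fin m) := Finset.univ.filter (fun e => pref e c ∧ Wm v r e) with hD
  have hdD : d ∈ D := by
    rw [hD, Finset.mem_filter]
    exact ⟨Finset.mem_univ d, hdc, hdW⟩
  -- take the most preferred element of D
  obtain ⟨a, haD, hamax⟩ := finset_max_pref htot htr D ⟨d, hdD⟩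
  rw [hD, Finset.mem_filter] at haD
  obtain ⟨-, hac, haW⟩ := haD
  -- everything preferred to a is not a possible winner
  have hup : ∀ h, pref h a → ¬ Wm v r h := by
    intro h hh hW
    have hhc : pref h c := htr hh hac
    have hhD : h ∈ D := by rw [hD, Finset.mem_filter]; exact ⟨Finset.mem_univ h, hhc, hW⟩
    have hha : h ≠ a := fun heq => hirr a (heq ▸ hh)
    exact hirr a (htr (hamax h hhD hha) hh)
  by_cases hpiv : ∃ s, l1 s v ≤ r ∧ outcome s a = a ∧ winner s ≠ a
  · -- a has a pivot : a dominates b, contradicting maximality of the response c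
    obtain ⟨s, hs, hoa, hwa⟩ := hpiv
    have hwaW : Wm v r (winner s) := winner_Wm hs
    have hpaw : pref a (winner s) := by
      rcases htot a (winner s) (fun h => hwa h.symm) with h | h
      · exact h
      · exact absurd hwaW (hup _ h)
    have hdomab : Dominates {s | l1 s v ≤ r} pref a b := by
      constructor
      · refine ⟨s, hs, ?_⟩
        rcases outcome_cases s b with hb | hb
        · exact absurd ⟨s, hs, hb⟩ hbW
        · rw [hb, hoa]; exact hpaw
      · rintro ⟨s', hs', hp'⟩
        have hs'' : l1 s' v ≤ r := hs'
        rcases outcome_cases s b  with _ | _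
        all_goals {
          rcases outcome_cases s' b with hb' | hb'
          · exact absurd ⟨s', hs'', hb'⟩ hbW
          · rcases outcome_cases s' a with ha' | ha'
            · rw [hb', ha'] at hp'
              exact absurd (winner_Wm hs'') (hup _ hp')
            · rw [hb', ha'] at hp'
              exact hirr _ hp' }
    have hanec : a ≠ c := fun heq => hirr c (heq ▸ hac)
    have hca := hmax a hdomab hanec
    exact hirr a (htr hac hca)
  · -- a has no pivot : a pivots against c's witness, contradicting safety
    push_neg at hpiv
    have hnp : ∀ s, l1 s v ≤ r → outcome s a = a → winner s = a := by
      intro s hs hoa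
      by_contra hne
      exact hne (hpiv s hs hoa)
    obtain ⟨sd, hsd, hod⟩ := haW
    obtain ⟨sc, hsc, hoc⟩ := hcW
    have hanec : a ≠ c := fun heq => hirr c (heq ▸ hac)
    obtain ⟨s, hs, hws, hocs⟩ := no_pivot_pivots v r hanec hsd hsc hod hoc hnp
    have := hsafe s hs hocs (by rw [hws]; exact hanec)
    rw [hws] at this
    exact hirr c (htr this hac)

end withPref

end Dominance

section Profiles

open Finset

variable {m n : ℕ}

lemma scoreExc_stable (a a' : Fin n → Fin m) (j : Fin n)
    (hoff : ∀ k, k ≠ j → a' k = a k) : scoreExc a' j = scoreExc a j := by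
  classical
  funext cl
  unfold scoreExc
  rw [Finset.card_filter, Finset.card_filter]
  apply Finset.sum_congr rfl
  intro k _
  by_cases hk : k = j
  · subst hk
    rw [if_neg (fun h => h.1 rfl), if_neg (fun h => h.1 rfl)]
  · rw [hoff k hk]

lemma scoreExc_decomp (a : Fin n → Fin m) (i j : Fin n) (hij : i ≠ j) :
    scoreExc a i
      = addVote (fun cl => (Finset.univ.filter fun k => k ≠ i ∧ k ≠ j ∧ a k = cl).card)
          (a j) := by
  classical
  funext cl
  unfold scoreExc addVote
  simp only []
  rw [Finset.card_filter, Finset.card_filter]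
  rw [← Finset.add_sum_erase _ _ (Finset.mem_univ j), ← Finset.add_sum_erase _ _ (Finset.mem_univ j)]
  have h1 : (if j ≠ i ∧ a j = cl then (1:ℕ) else 0) = (if cl = a j then (1:ℕ) else 0) := by
    by_cases h : a j = cl
    · rw [if_pos ⟨fun h' => hij h'.symm, h⟩, if_pos h.symm]
    · rw [if_neg (fun hh => h hh.2), if_neg (fun hh => h hh.symm)]
  have h2 : (if j ≠ i ∧ j ≠ j ∧ a j = cl then (1:ℕ) else 0) = 0 := by
    rw [if_neg]; rintro ⟨-, hjj, -⟩; exact hjj rfl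
  have h3 : ∀ k ∈ Finset.univ.erase j,
      (if k ≠ i ∧ a k = cl then (1:ℕ) else 0)
        = (if k ≠ i ∧ k ≠ j ∧ a k = cl then 1 else 0) := by
    intro k hk
    have hkj := Finset.ne_of_mem_erase hk
    by_cases h : k ≠ i ∧ a k = cl
    · rw [if_pos h, if_pos ⟨h.1, hkj, h.2⟩]
    · rw [if_neg h, if_neg (fun hh => h ⟨hh.1, hh.2.2⟩)]
  rw [h1, h2, Finset.sum_congr rfl h3]
  omega

lemma u_congr (a a' : Fin n → Fin m) (i j : Fin n) (hoff : ∀ k, k ≠ j → a' k = a k) :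
    (fun cl => (Finset.univ.filter fun k => k ≠ i ∧ k ≠ j ∧ a' k = cl).card)
      = (fun cl => (Finset.univ.filter fun k => k ≠ i ∧ k ≠ j ∧ a k = cl).card) := by
  classical
  funext cl
  rw [Finset.card_filter, Finset.card_filter]
  apply Finset.sum_congr rfl
  intro k _
  by_cases hk : k = j
  · subst hk
    rw [if_neg (fun h => h.2.1 rfl), if_neg (fun h => h.2.1 rfl)]
  · rw [hoff k hk]

lemma u_comm (a : Fin n → Fin m) (i j : Fin n) :
    (fun cl => (Finset.univ.filter fun k => k ≠ j ∧ k ≠ i ∧ a k = cl).card)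
      = (fun cl => (Finset.univ.filter fun k => k ≠ i ∧ k ≠ j ∧ a k = cl).card) := by
  classical
  funext cl
  rw [Finset.card_filter, Finset.card_filter]
  apply Finset.sum_congr rfl
  intro k _
  by_cases h1 : k = i
  · rw [if_neg (fun h => h.2.1 h1), if_neg (fun h => h.1 h1)]
  · by_cases h2 : k = j
    · rw [if_neg (fun h => h.1 h2), if_neg (fun h => h.2.1 h2)]
    · by_cases h3 : a k = cl
      · rw [if_pos ⟨h2, h1, h3⟩, if_pos ⟨h1, h2, h3⟩]
      · rw [if_neg (fun h => h3 h.2.2), if_neg (fun h => h3 h.2.2)]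

end Profiles






/-- from the truthful state, any sequence of singleton local-dominance
strategic steps has length at most `n (m - 1)`; hence the iterative process converges to a
voting equilibrium within `n (m - 1)` steps. -/
theorem convergence_from_truth {m n : ℕ} [NeZero m] (Q : Fin n → Fin m → Fin m → Prop)
    (hQ : ∀ i, IsStrictTotalOrder (Fin m) (Q i)) (r T : ℕ)
    (seq : ℕ → Fin n → Fin m)
    (h0 : Truthful Q (seq 0))
    (hstep : ∀ t, t < T → StepRel Q r (seq t) (seq (t + 1))) :
    T ≤ n * (m - 1) := by
  classical
  -- order facts
  have htot : ∀ i (a b : Fin m), a ≠ b → Q i a b ∨ Q i b a := by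
    intro i a b hab
    by_cases h1 : Q i a b
    · exact Or.inl h1
    · by_cases h2 : Q i b a
      · exact Or.inr h2
      · exact absurd ((hQ i).trichotomous a b h1 h2) hab
  have hirr : ∀ i (a : Fin m), ¬ Q i a a := fun i => (hQ i).irrefl
  have htr : ∀ i {a b c : Fin m}, Q i a b → Q i b c → Q i a c :=
    fun i _ _ _ h1 h2 => (hQ i).trans _ _ _ h1 h2
  -- the invariant : no voter's strictly better candidate is a possible winner
  have hInv : ∀ t, t ≤ T → ∀ i d, Q i d (seq t i) → ¬ Wm (scoreExc (seq t) i) r d := by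
    intro t
    induction t with
    | zero =>
      intro _ i d hd hW
      have hne : d ≠ seq 0 i := fun h => hirr i d (h ▸ hd)
      have h0' := h0 i d hne
      exact hirr i d (htr i hd h0')
    | succ t ih =>
      intro ht i d hd
      have htT : t ≤ T := le_of_lt (lt_of_lt_of_le (Nat.lt_succ_self t) ht)
      have htlt : t < T := lt_of_lt_of_le (Nat.lt_succ_self t) ht
      obtain ⟨j, hoff, hne, hresp⟩ := hstep t htlt
      by_cases hij : i = j
      · -- the mover : use mover_preserve (ball unchanged)
        subst hij
        rw [scoreExc_stable (seq t) (seq (t+1)) i hoff]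
        exact mover_preserve (htot i) (hirr i) (fun {a b c} => htr i) hne (ih htT i)
          hresp.1 (fun e he hec => hresp.2 e he hec) d hd
      · -- other voters : use the transfer lemma
        have hii : seq (t+1) i = seq t i := hoff i hij
        have hd' : Q i d (seq t i) := by rw [hii] at hd; exact hd
        set u : Fin m → ℕ :=
          fun cl => (Finset.univ.filter fun k => k ≠ i ∧ k ≠ j ∧ seq t k = cl).card with hu
        have hdec1 : scoreExc (seq t) i = addVote u (seq t j) := scoreExc_decomp _ i j hij
        have hdec2 : scoreExc (seq (t+1)) i = addVote u (seq (t+1) j) := by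
          rw [scoreExc_decomp (seq (t+1)) i j hij, u_congr (seq t) (seq (t+1)) i j hoff]
        have hdec3 : scoreExc (seq t) j = addVote u (seq t i) := by
          rw [scoreExc_decomp (seq t) j i (fun h => hij h.symm), u_comm (seq t) i j]
        -- H1 : d is not a possible winner for i at time t
        have hH1 : ∀ k, r + 1 ≤ Fc (addVote u (seq t j)) d k := by
          have := ih htT i d hd'
          rw [hdec1] at this
          intro k
          by_contra hk
          push_neg at hk
          exact this ((Wmem_iff _ _ _).mpr ⟨k, by omega⟩)
        -- facts about the mover j
        have hINVj := ih htT j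
        have hdomj : Dominates {s | l1 s (scoreExc (seq t) j) ≤ r} (Q j)
            (seq (t+1) j) (seq t j) := hresp.1
        have hH2 : ∃ k, Fc (addVote u (seq t i)) (seq (t+1) j) k ≤ r := by
          have hW : Wm (scoreExc (seq t) j) r (seq (t+1) j) :=
            dom_cW (htot j) (hirr j) (fun {a b c} => htr j) hINVj hdomj.1
          rw [hdec3] at hW
          exact (Wmem_iff _ _ _).mp hW
        have hH3 : ∀ k, r + 1 ≤ Fc (addVote u (seq t i)) (seq t j) k := by
          have hnW : ¬ Wm (scoreExc (seq t) j) r (seq t j) :=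
            dom_bnW (htot j) (hirr j) (fun {a b c} => htr j) hne hINVj hdomj
          rw [hdec3] at hnW
          intro k
          by_contra hk
          push_neg at hk
          exact hnW ((Wmem_iff _ _ _).mpr ⟨k, by omega⟩)
        have hxy : seq t j ≠ seq (t+1) j := Ne.symm hne
        have hdb : d ≠ seq t i := by
          intro h
          rw [← h] at hd'
          exact hirr i d hd'
        have := transfer u r hxy hdb hH1 hH2 hH3
        rw [hdec2]
        intro hW
        obtain ⟨k, hk⟩ := (Wmem_iff _ _ _).mp hW
        have := this k
        omega
  -- compromise : each move is to a strictly less preferred candidate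
  have hcomp : ∀ t, t < T → ∀ j, (∀ k, k ≠ j → seq (t+1) k = seq t k) →
      seq (t+1) j ≠ seq t j →
      Resp Q r (seq t) j (seq (t+1) j) → Q j (seq t j) (seq (t+1) j) := by
    intro t htlt j hoff hne hresp
    exact beats_compromise (htot j) (hirr j) (fun {a b c} => htr j) hne
      (hInv t (le_of_lt htlt) j) hresp.1.1
  -- the potential function
  set φ : ℕ → ℕ :=
    fun t => ∑ i, (Finset.univ.filter fun d => Q i d (seq t i)).card with hφ
  have hstep_pot : ∀ t, t < T → φ t + 1 ≤ φ (t+1) := by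
    intro t htlt
    obtain ⟨j, hoff, hne, hresp⟩ := hstep t htlt
    have hbc : Q j (seq t j) (seq (t+1) j) := hcomp t htlt j hoff hne hresp
    rw [hφ]
    simp only []
    rw [← Finset.add_sum_erase _ _ (Finset.mem_univ j), ← Finset.add_sum_erase _ _ (Finset.mem_univ j)]
    have hsame : ∀ k ∈ Finset.univ.erase j,
        (Finset.univ.filter fun d => Q k d (seq t k)).card
          = (Finset.univ.filter fun d => Q k d (seq (t+1) k)).card := by
      intro k hk
      rw [hoff k (Finset.ne_of_mem_erase hk)]
    have hcard : (Finset.univ.filter fun d => Q j d (seq t j)).card + 1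
        ≤ (Finset.univ.filter fun d => Q j d (seq (t+1) j)).card := by
      have hss : (Finset.univ.filter fun d => Q j d (seq t j))
          ⊂ (Finset.univ.filter fun d => Q j d (seq (t+1) j)) := by
        constructor
        · intro d hdmem
          rw [Finset.mem_filter] at hdmem ⊢
          exact ⟨hdmem.1, htr j hdmem.2 hbc⟩
        · intro hsub
          have : seq t j ∈ (Finset.univ.filter fun d => Q j d (seq (t+1) j)) :=
            Finset.mem_filter.mpr ⟨Finset.mem_univ _, hbc⟩
          have := hsub this
          rw [Finset.mem_filter] at this
          exact hirr j _ this.2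
      exact Finset.card_lt_card hss
    have := Finset.sum_congr rfl hsame
    omega
  -- potential grows at least linearly
  have hmono : ∀ t, t ≤ T → t ≤ φ t := by
    intro t
    induction t with
    | zero => intro _; exact Nat.zero_le _
    | succ t ih =>
      intro ht
      have h1 := ih (le_of_lt (lt_of_lt_of_le (Nat.lt_succ_self t) ht))
      have h2 := hstep_pot t (lt_of_lt_of_le (Nat.lt_succ_self t) ht)
      omega
  -- potential is bounded by n * (m - 1)
  have hbound : φ T ≤ n * (m - 1) := by
    rw [hφ]
    simp only []
    have hterm : ∀ i ∈ (Finset.univ : Finset (Fin n)),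
        (Finset.univ.filter fun d => Q i d (seq T i)).card ≤ m - 1 := by
      intro i _
      have hsub : (Finset.univ.filter fun d => Q i d (seq T i))
          ⊆ Finset.univ.erase (seq T i) := by
        intro d hdmem
        rw [Finset.mem_filter] at hdmem
        rw [Finset.mem_erase]
        exact ⟨fun h => hirr i d (h ▸ hdmem.2), Finset.mem_univ d⟩
      calc (Finset.univ.filter fun d => Q i d (seq T i)).card
          ≤ (Finset.univ.erase (seq T i)).card := Finset.card_le_card hsub
        _ = m - 1 := by
            rw [Finset.card_erase_of_mem (Finset.mem_univ _), Finset.card_univ,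
              Fintype.card_fin]
    calc (∑ i, (Finset.univ.filter fun d => Q i d (seq T i)).card)
        ≤ Finset.univ.card • (m - 1) := Finset.sum_le_card_nsmul _ _ _ hterm
      _ = n * (m - 1) := by rw [Finset.card_univ, Fintype.card_fin, smul_eq_mul]
  have := hmono T le_rfl
  omega
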